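/- Fix positive integers d, D and d_W ≥ 2, and n ≥ 1. Let W₁, …, W_n : Fin d_W → Fin d_W → Matrix (Fin d) (Fin d) ℂ all be lower triangular ((W a b) = 0 whenever a < b) with (W_i) 0 0 = 1 for every i. Let B¹, …, B^{n−1} : Fin d → Matrix (Fin D) (Fin D) ℂ be left-canonical (∑_s (X s)ᴴ * (X s) = 1) and let B_C : Fin d → Matrix (Fin D) (Fin D) ℂ be arbitrary. Define L' = I₁ ▷ E_{B¹}^{W₁} ▷ ⋯ ▷ E_{B^{n−1}}^{W_{n−1}}. Then for all β ∈ Fin D, s' ∈ Fin d, γ ∈ Fin D: ∑_{α,a,α',a',s} L' α a β * (B_C s) α α' * ((W_n a a') s s') * I_top α' a' γ = 0. -/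

import Mathlib

open Matrix

/-- Left action of the MPO transfer matrix `E_A^{[W]}` on a boundary tensor `L`. -/
noncomputable def mpoActL {d D dw : ℕ}
    (A : Fin d → Matrix (Fin D) (Fin D) ℂ)
    (W : Fin dw → Fin dw → Matrix (Fin d) (Fin d) ℂ)
    (L : Fin D → Fin dw → Fin D → ℂ) : Fin D → Fin dw → Fin D → ℂ :=
  fun α' a' β' =>
    ∑ α : Fin D, ∑ a : Fin dw, ∑ β : Fin D, ∑ s : Fin d, ∑ s' : Fin d,
      L α a β * (A s) α α' * (W a a') s s' * (starRingEnd ℂ) ((A s') β β')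

/-- The boundary tensor `I₁ α a β = δ_{a,0} δ_{αβ}`. -/
noncomputable def Ione (D dw : ℕ) [NeZero dw] : Fin D → Fin dw → Fin D → ℂ :=
  fun α a β => if a = 0 ∧ α = β then 1 else 0

/-- The boundary tensor `I_top α a β = δ_{a, last} δ_{αβ}`. -/
noncomputable def Itop (D dW : ℕ) : Fin D → Fin (dW + 1) → Fin D → ℂ :=
  fun α a β => if a = Fin.last dW ∧ α = β then 1 else 0

/-- Acting with the MPO transfer matrix of a left-canonical tensor and a lower-triangular
MPO tensor with `W 0 0 = 1` fixes the boundary tensor `I₁`. -/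
lemma mpoActL_Ione {d D dw : ℕ} [NeZero dw]
    (A : Fin d → Matrix (Fin D) (Fin D) ℂ)
    (W : Fin dw → Fin dw → Matrix (Fin d) (Fin d) ℂ)
    (hWtri : ∀ a b : Fin dw, a < b → W a b = 0)
    (hW00 : W 0 0 = 1)
    (hA : ∑ s : Fin d, (A s)ᴴ * A s = 1) :
    mpoActL A W (Ione D dw) = Ione D dw := by
  funext α' a' β'
  unfold mpoActL Ione
  have hterm : ∀ (α : Fin D) (a : Fin dw) (β : Fin D) (s s' : Fin d),
      (if a = 0 ∧ α = β then (1:ℂ) else 0) * (A s) α α' * (W a a') s s'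
        * (starRingEnd ℂ) ((A s') β β')
      = if a = 0 then (if β = α then (A s) α α' * (W a a') s s'
          * (starRingEnd ℂ) ((A s') β β') else 0) else 0 := by
    intro α a β s s'
    by_cases h1 : a = 0 <;> by_cases h2 : α = β <;> simp [h1, h2, eq_comm]
  simp only [hterm, Finset.sum_ite_irrel, Finset.sum_const_zero,
    Finset.sum_ite_eq, Finset.sum_ite_eq', Finset.mem_univ, if_true]
  by_cases ha' : a' = 0
  · subst ha'
    simp only [hW00, Matrix.one_apply]
    have h2 : ∀ (α : Fin D) (s : Fin d),
        (∑ s' : Fin d, (A s) α α' * (if s = s' then (1:ℂ) else 0)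
          * (starRingEnd ℂ) ((A s') α β'))
        = (A s) α α' * (starRingEnd ℂ) ((A s) α β') := by
      intro α s
      rw [Finset.sum_eq_single s]
      · simp
      · intro b _ hb; simp [Ne.symm hb]
      · simp
    simp only [h2]
    rw [Finset.sum_comm]
    have h3 : ∀ s : Fin d, (∑ α : Fin D, (A s) α α' * (starRingEnd ℂ) ((A s) α β'))
        = ((A s)ᴴ * (A s)) β' α' := by
      intro s
      simp [Matrix.mul_apply, Matrix.conjTranspose_apply, mul_comm]
    simp only [h3]
    rw [← Matrix.sum_apply, hA]
    simp [Matrix.one_apply, eq_comm, and_comm]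
  · have h0 : W 0 a' = 0 := hWtri 0 a' ((Fin.zero_le a').lt_of_ne (Ne.symm ha'))
    simp [h0, ha']

/-- Folding the transfer matrices of left-canonical tensors over any list of sites
fixes `I₁`. -/
lemma foldl_mpoActL_Ione {d D dw m : ℕ} [NeZero dw]
    (Ws : Fin m → Fin dw → Fin dw → Matrix (Fin d) (Fin d) ℂ)
    (hWstri : ∀ (i : Fin m) (a b : Fin dw), a < b → Ws i a b = 0)
    (hWs00 : ∀ i : Fin m, Ws i 0 0 = 1)
    (B : Fin m → Fin d → Matrix (Fin D) (Fin D) ℂ)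
    (hB : ∀ i : Fin m, ∑ s : Fin d, (B i s)ᴴ * B i s = 1)
    (l : List (Fin m)) :
    l.foldl (fun acc i => mpoActL (B i) (Ws i) acc) (Ione D dw) = Ione D dw := by
  induction l with
  | nil => rfl
  | cons i l ih =>
      rw [List.foldl_cons, mpoActL_Ione (B i) (Ws i) (hWstri i) (hWs00 i) (hB i), ih]

/-- Paper's Lemma 6: `⟨I₁| E_D |I_top⟩ = 0`, where `E_D` consists of the MPO transfer
matrices of the left-canonical tensors `B¹, …, B^{n−1}` followed by the column tensor
built from the center-site tensor `B_C` and `W_n` with an open physical leg.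
Here the MPO bond dimension is `dW + 2 ≥ 2`, and `m = n − 1` is the number of
left-canonical tensors, so that `n = m + 1 ≥ 1`. -/
theorem lemma6_I1_ED_Itop_eq_zero
    (d D dW m : ℕ) (hd : 0 < d) (hD : 0 < D)
    (Ws : Fin m → Fin (dW + 2) → Fin (dW + 2) → Matrix (Fin d) (Fin d) ℂ)
    (Wn : Fin (dW + 2) → Fin (dW + 2) → Matrix (Fin d) (Fin d) ℂ)
    (hWstri : ∀ (i : Fin m) (a b : Fin (dW + 2)), a < b → Ws i a b = 0)
    (hWntri : ∀ a b : Fin (dW + 2), a < b → Wn a b = 0)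
    (hWs00 : ∀ i : Fin m, Ws i 0 0 = 1)
    (hWn00 : Wn 0 0 = 1)
    (B : Fin m → Fin d → Matrix (Fin D) (Fin D) ℂ)
    (hB : ∀ i : Fin m, ∑ s : Fin d, (B i s)ᴴ * B i s = 1)
    (B_C : Fin d → Matrix (Fin D) (Fin D) ℂ)
    (β : Fin D) (s' : Fin d) (γ : Fin D) :
    let L' : Fin D → Fin (dW + 2) → Fin D → ℂ :=
      (List.finRange m).foldl (fun acc i => mpoActL (B i) (Ws i) acc) (Ione D (dW + 2))
    ∑ α : Fin D, ∑ a : Fin (dW + 2), ∑ α' : Fin D, ∑ a' : Fin (dW + 2), ∑ s : Fin d,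
        L' α a β * (B_C s) α α' * (Wn a a') s s' * Itop D (dW + 1) α' a' γ
      = 0 := by
  intro L'
  have hL' : L' = Ione D (dW + 2) :=
    foldl_mpoActL_Ione Ws hWstri hWs00 B hB (List.finRange m)
  apply Finset.sum_eq_zero; intro α _
  apply Finset.sum_eq_zero; intro a _
  apply Finset.sum_eq_zero; intro α' _
  apply Finset.sum_eq_zero; intro a' _
  apply Finset.sum_eq_zero; intro s _
  rw [hL']
  unfold Ione Itop
  by_cases h1 : a = 0 ∧ α = β
  · by_cases h2 : a' = Fin.last (dW + 1) ∧ α' = γ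
    · have h0 : Wn a a' = 0 := by
        rw [h1.1, h2.1]
        exact hWntri 0 (Fin.last (dW + 1)) (by
          simp [Fin.lt_def, Fin.last])
      simp [h0]
    · simp [h2]
  · simp [h1]
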